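/- Let R be a standard graded Cohen–Macaulay k-algebra of dimension d ≥ 1 with canonical module ω, a-invariant a, and J generated by a linear system of parameters. For every i and j ≥ a+d, if the colon ideal J^i : 𝔪^j is generated in a single degree, then J^i : 𝔪^j = 𝔪^{i-j+a+d}. -/

import Mathlib

set_option maxHeartbeats 1000000
set_option synthInstance.maxHeartbeats 200000

/-- Integer power of an ideal; by convention nonpositive exponents give the unit ideal. -/
def ipow {R : Type*} [CommRing R] (I : Ideal R) (n : ℤ) : Ideal R := I ^ n.toNat

private lemma pow_le_span_pow {R : Type*} [CommRing R] {d : ℕ} (y : Fin d → R)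
    (n K : ℕ) (hK : d * (n - 1) < K) :
    (Ideal.span (Set.range y)) ^ K ≤ Ideal.span (Set.range fun t => y t ^ n) := by
  classical
  have key : ∀ (K : ℕ), (Ideal.span (Set.range y)) ^ K ≤
      Ideal.span {r : R | ∃ α : Fin d → ℕ, (∑ t, α t) = K ∧ r = ∏ t, y t ^ α t} := by
    intro K
    induction K with
    | zero =>
      have h1 : (1 : R) ∈
          Ideal.span {r : R | ∃ α : Fin d → ℕ, (∑ t, α t) = 0 ∧ r = ∏ t, y t ^ α t} :=
        Ideal.subset_span ⟨fun _ => 0, by simp, by simp⟩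
      rw [pow_zero, Ideal.one_eq_top]
      exact le_of_eq ((Ideal.eq_top_iff_one _).2 h1).symm
    | succ K ih =>
      rw [pow_succ]
      refine le_trans (Ideal.mul_mono ih le_rfl) ?_
      rw [Ideal.span_mul_span']
      refine Ideal.span_le.2 ?_
      rintro x ⟨m, hm, g, hg, rfl⟩
      obtain ⟨α, hsum, rfl⟩ := hm
      obtain ⟨u, rfl⟩ := hg
      refine Ideal.subset_span ⟨Function.update α u (α u + 1), ?_, ?_⟩
      · rw [Finset.sum_update_of_mem (Finset.mem_univ u), Finset.sdiff_singleton_eq_erase]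
        rw [← Finset.add_sum_erase _ α (Finset.mem_univ u)] at hsum
        omega
      · have hupd : ∏ t ∈ Finset.univ.erase u, y t ^ (Function.update α u (α u + 1)) t
            = ∏ t ∈ Finset.univ.erase u, y t ^ α t :=
          Finset.prod_congr rfl (fun x hx => by
            rw [Function.update_of_ne (Finset.ne_of_mem_erase hx)])
        show (∏ t, y t ^ α t) * y u = ∏ t, y t ^ (Function.update α u (α u + 1)) t
        rw [← Finset.mul_prod_erase _ (fun t => y t ^ (Function.update α u (α u + 1)) t)
            (Finset.mem_univ u), hupd, Function.update_self,
          ← Finset.mul_prod_erase _ (fun t => y t ^ α t) (Finset.mem_univ u)]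
        ring
  refine (key K).trans (Ideal.span_le.2 ?_)
  rintro r ⟨α, hsum, rfl⟩
  have hex : ∃ u, n ≤ α u := by
    by_contra hc
    push_neg at hc
    have hb : ∑ t, α t ≤ d * (n - 1) := by
      calc ∑ t, α t ≤ Finset.univ.card • (n - 1) :=
            Finset.sum_le_card_nsmul _ _ _ (fun x _ => by have := hc x; omega)
        _ = d * (n - 1) := by simp [Finset.card_univ, smul_eq_mul]
    omega
  obtain ⟨u, hu⟩ := hex
  have hprod : ∏ t, y t ^ α t
      = y u ^ n * (y u ^ (α u - n) * ∏ t ∈ Finset.univ.erase u, y t ^ α t) := by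
    rw [← Finset.mul_prod_erase _ (fun t => y t ^ α t) (Finset.mem_univ u), ← mul_assoc,
      ← pow_add]
    congr 2
    omega
  rw [hprod]
  exact Ideal.mul_mem_right _ _ (Ideal.subset_span ⟨u, rfl⟩)

/-- **Corollary 2.14**: for every `i` and `j ≥ a + d`, if the colon ideal `J^i : 𝔪^j` is
generated in a single degree then `J^i : 𝔪^j = 𝔪^(i-j+a+d)`. -/
theorem statement_12
    {k R : Type*} [Field k] [CommRing R] [Algebra k R] [IsNoetherianRing R]
    -- `R` is standard graded over `k`:
    (𝒜 : ℤ → Submodule k R) [GradedAlgebra 𝒜]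
    (hneg : ∀ i : ℤ, i < 0 → 𝒜 i = ⊥)
    (hstd : ∀ i : ℤ, 0 ≤ i → 𝒜 (i + 1) = 𝒜 1 * 𝒜 i)
    -- of dimension `d ≥ 1`:
    (d : ℕ) (hd : 1 ≤ d) (hdim : ringKrullDim R = d)
    -- `𝔪` is the homogeneous maximal ideal:
    (𝔪 : Ideal R) (h𝔪 : 𝔪 = Ideal.span (𝒜 1 : Set R))
    -- `y` is a linear system of parameters; its regularity encodes that `R` is Cohen–Macaulay:
    (y : Fin d → R) (hy1 : ∀ t, y t ∈ 𝒜 1)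
    (hyreg : RingTheory.Sequence.IsRegular R (List.ofFn y))
    (J : Ideal R) (hJ : J = Ideal.span (Set.range y))
    (hsop : 𝔪 ≤ J.radical)
    -- the `a`-invariant (the negative of the initial degree of the canonical module `ω`):
    (a : ℤ) (ha : 0 ≤ a + d)
    -- `J` is a reduction of `𝔪` with reduction number `a + d`:
    (hred : ∀ n : ℤ, a + d ≤ n → ipow 𝔪 (n + 1) = J * ipow 𝔪 n)
    -- `ω` is the graded canonical module of `R`: a finitely generated faithful graded
    -- maximal Cohen–Macaulay module with initial degree `-a`, generated in degrees `≤ d`,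
    -- whose Artinian reductions `ω/J^{[n]}ω` have socle concentrated in degree `n·d`:
    {ω : Type*} [AddCommGroup ω] [Module R ω] [Module k ω] [IsScalarTower k R ω]
    (w : ℤ → Submodule k ω)
    (hwint : DirectSum.IsInternal w)
    (hwsmul : ∀ (p q : ℤ), ∀ r ∈ 𝒜 p, ∀ x ∈ w q, r • x ∈ w (p + q))
    [Module.Finite R ω]
    (hfaith : Module.annihilator R ω = ⊥)
    (hbelow : ∀ p : ℤ, p < -a → w p = ⊥)
    (hinit : w (-a) ≠ ⊥)
    (hgend : Submodule.span R (⋃ p : ℤ, ⋃ (_ : p ≤ (d : ℤ)), (w p : Set ω)) = ⊤)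
    (hregw : RingTheory.Sequence.IsRegular ω (List.ofFn y))
    (hsoc : ∀ n : ℕ, ∀ x : ω,
      (∀ m ∈ 𝔪, m • x ∈ (Ideal.span (Set.range fun t => y t ^ n)) • (⊤ : Submodule R ω)) →
      ∃ u ∈ (Ideal.span (Set.range fun t => y t ^ n)) • (⊤ : Submodule R ω),
        ∃ v ∈ w ((n : ℤ) * d), x = u + v)
    (i j : ℤ) (hj : a + d ≤ j)
    (hone : ∃ t : ℤ, Submodule.colon (ipow J i) (ipow 𝔪 j)
        = Ideal.span ((Submodule.colon (ipow J i) (ipow 𝔪 j) : Set R) ∩ (𝒜 t : Set R))) :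
    Submodule.colon (ipow J i) (ipow 𝔪 j) = ipow 𝔪 (i - j + a + d) := by
  classical
  have hj0 : (0:ℤ) ≤ j := le_trans ha hj
  have hym : ∀ t, y t ∈ 𝔪 := fun t => h𝔪 ▸ Ideal.subset_span (hy1 t)
  -- degree `c` pieces are inside `𝔪 ^ c`
  have hAm : ∀ c : ℕ, ∀ x ∈ 𝒜 (c : ℤ), x ∈ 𝔪 ^ c := by
    intro c
    induction c with
    | zero => intro x _; simp [Ideal.one_eq_top]
    | succ c ih =>
      intro x hx
      have ecast : (((c+1:ℕ)):ℤ) = (c:ℤ)+1 := by push_cast; ring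
      rw [ecast, hstd (c : ℤ) (by positivity)] at hx
      refine Submodule.mul_induction_on hx ?_ ?_
      · intro r hr s' hs'
        rw [pow_succ']
        exact Ideal.mul_mem_mul (h𝔪 ▸ Ideal.subset_span hr) (ih s' hs')
      · intro u v hu hv
        exact add_mem hu hv
  -- iterated reduction property
  have hredN : ∀ (c : ℤ), a + ↑d ≤ c → ∀ kk : ℕ, ipow 𝔪 (c + kk) = J ^ kk * ipow 𝔪 c := by
    intro c hc kk
    induction kk with
    | zero => simp
    | succ kk ih =>
      have e2 : (((kk+1:ℕ)):ℤ) = (kk:ℤ)+1 := by push_cast; ring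
      have e1 : c + ((kk:ℤ)+1) = (c + kk) + 1 := by ring
      rw [e2, e1, hred _ (by omega), ih, pow_succ]
      ring
  set s : ℤ := i - j + a + d with hs_def
  by_cases hs : s ≤ 0
  · -- in this case both sides are the unit ideal
    have h2 : ipow 𝔪 j ≤ ipow J i := by
      by_cases hi : i ≤ 0
      · have hz : i.toNat = 0 := Int.toNat_of_nonpos hi
        simp only [ipow]
        rw [hz, pow_zero, Ideal.one_eq_top]
        exact le_top
      · push_neg at hi
        have hji : a + ↑d ≤ j - i := by omega
        have h3 := hredN (j - i) hji i.toNat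
        have e1 : (j - i) + (i.toNat : ℤ) = j := by omega
        rw [e1] at h3
        rw [h3]
        exact Ideal.mul_le_left
    have hcolon : Submodule.colon (ipow J i) (ipow 𝔪 j) = ⊤ := by
      rw [eq_top_iff]
      intro r _
      rw [Submodule.mem_colon]
      intro p hp
      rw [smul_eq_mul]
      exact Ideal.mul_mem_left _ r (h2 hp)
    have hm0 : ipow 𝔪 s = ⊤ := by
      have hz : s.toNat = 0 := Int.toNat_of_nonpos hs
      simp only [ipow]
      rw [hz, pow_zero, Ideal.one_eq_top]
    rw [hcolon, hm0]
  · push_neg at hs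
    have hs1 : (1:ℤ) ≤ s := hs
    have hi1 : (1:ℤ) ≤ i := by omega
    -- the inclusion `𝔪 ^ s ≤ (J^i : 𝔪^j)`
    have hsge : ipow 𝔪 s ≤ Submodule.colon (ipow J i) (ipow 𝔪 j) := by
      intro r hr
      rw [Submodule.mem_colon]
      intro p hp
      rw [smul_eq_mul]
      have h1 : r * p ∈ ipow 𝔪 (s + j) := by
        simp only [ipow]
        rw [Int.toNat_add (by omega) hj0, pow_add]
        exact Ideal.mul_mem_mul hr hp
      have h2 : s + j = (a + ↑d) + i := by omega
      rw [h2] at h1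
      have h3 := hredN (a + ↑d) le_rfl i.toNat
      have e1 : (a + ↑d) + (i.toNat:ℤ) = (a + ↑d) + i := by omega
      rw [e1] at h3
      rw [h3] at h1
      exact Ideal.mul_le_left h1
    obtain ⟨t, ht⟩ := hone
    by_cases hts : s ≤ t
    · -- generated in a single degree `t ≥ s`: immediate
      refine le_antisymm ?_ hsge
      rw [ht]
      refine Ideal.span_le.2 ?_
      rintro x ⟨-, hx2⟩
      have ht0 : (0:ℤ) ≤ t := by omega
      have hxt : x ∈ 𝔪 ^ t.toNat := by
        refine hAm t.toNat x ?_
        rw [Int.toNat_of_nonneg ht0]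
        exact hx2
      exact Ideal.pow_le_pow_right (by omega) hxt
    · push_neg at hts
      exfalso
      -- now `t < s`; derive a contradiction using the canonical module
      set n : ℕ := (s + i + 2).toNat with hn_def
      have hn : (n:ℤ) = s + i + 2 := by omega
      have hn1 : 1 ≤ n := by omega
      set A : ℕ := d * (n - 1) with hA_def
      have hA : (A:ℤ) = (d:ℤ) * ((n:ℤ) - 1) := by
        rw [hA_def, Nat.cast_mul, Nat.cast_sub hn1, Nat.cast_one]
      have hAge : (n:ℤ) - 1 ≤ (A:ℤ) := by
        rw [hA]
        have hd1 : (1:ℤ) ≤ (d:ℤ) := by exact_mod_cast hd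
        exact le_mul_of_one_le_left (by omega) hd1
      have hnd : (n:ℤ) * d = (A:ℤ) + d := by rw [hA]; ring
      set mZ : ℤ := (A:ℤ) + 1 - i with hmZ_def
      have hmZ0 : 0 ≤ mZ := by omega
      set c2 : ℤ := j + mZ with hc2_def
      have hc20 : 0 ≤ c2 := by omega
      set Jn : Ideal R := Ideal.span (Set.range fun t => y t ^ n) with hJn_def
      set N : Submodule R ω := Jn • (⊤ : Submodule R ω) with hN_def
      have hJK : J ^ (A + 1) ≤ Jn := by
        rw [hJ, hJn_def]
        exact pow_le_span_pow y n (A+1) (by omega)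
      obtain ⟨K0, hK0⟩ : ∃ K0 : ℕ, 𝔪 ^ K0 ≤ Jn := by
        have h1 : J ≤ Jn.radical := by
          intro x hx
          exact ⟨A+1, hJK (Ideal.pow_mem_pow hx _)⟩
        have h2 : 𝔪 ≤ Jn.radical := by
          refine le_trans hsop ?_
          calc J.radical ≤ (Jn.radical).radical := Ideal.radical_mono h1
            _ = Jn.radical := Jn.radical_idem
        exact Ideal.exists_pow_le_of_le_radical_of_fg h2 (IsNoetherian.noetherian 𝔪)
      -- graded projections on ω
      set π : ℤ → ω → ω := fun p x =>
        (((LinearEquiv.ofBijective (DirectSum.coeLinearMap w) hwint).symm x) p : ω) with hπ_def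
      have hπ0 : ∀ p, π p 0 = 0 := by intro p; simp [hπ_def]
      have hπadd : ∀ p x1 x2, π p (x1 + x2) = π p x1 + π p x2 := by
        intro p x1 x2
        simp [hπ_def, map_add]
      have hπmem : ∀ p x, π p x ∈ w p := fun p x => SetLike.coe_mem _
      have hπsame : ∀ p x, x ∈ w p → π p x = x := by
        intro p x hx
        simp only [hπ_def]
        rw [DirectSum.IsInternal.ofBijective_coeLinearMap_of_mem hwint hx]
      have hπne : ∀ p q x, x ∈ w q → q ≠ p → π p x = 0 := by
        intro p q x hx hqp
        simp only [hπ_def]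
        rw [DirectSum.IsInternal.ofBijective_coeLinearMap_of_mem_ne hwint hqp hx]
        rfl
      have wspan : ∀ (P : ω → Prop), P 0 → (∀ x1 x2, P x1 → P x2 → P (x1 + x2)) →
          (∀ q x, x ∈ w q → P x) → ∀ x, P x := by
        intro P h0 hadd hw x
        obtain ⟨ξ, rfl⟩ := hwint.2 x
        refine DirectSum.induction_on ξ ?_ ?_ ?_
        · rw [map_zero (DirectSum.coeAddMonoidHom w)]
          exact h0
        · intro q v
          rw [DirectSum.coeAddMonoidHom_of w q v]
          exact hw q v v.2
        · intro ξ1 ξ2 h1 h2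
          rw [map_add]
          exact hadd _ _ h1 h2
      have hπsmul : ∀ (cdeg : ℤ) (r : R), r ∈ 𝒜 cdeg → ∀ (x : ω) (p : ℤ),
          π p (r • x) = r • π (p - cdeg) x := by
        intro cdeg r hr
        refine wspan (fun x => ∀ p, π p (r • x) = r • π (p - cdeg) x) ?_ ?_ ?_
        · intro p; rw [smul_zero, hπ0, hπ0, smul_zero]
        · intro x1 x2 h1 h2 p
          rw [smul_add, hπadd, hπadd, h1 p, h2 p, smul_add]
        · intro q x hx p
          have hrx : r • x ∈ w (cdeg + q) := hwsmul _ _ _ hr _ hx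
          by_cases hpq : p = cdeg + q
          · subst hpq
            rw [hπsame _ _ hrx]
            have e : cdeg + q - cdeg = q := by ring
            rw [e, hπsame _ _ hx]
          · rw [hπne _ _ _ hrx (fun h => hpq h.symm),
              hπne _ _ _ hx (fun h => hpq (by omega)), smul_zero]
      have hyn : ∀ t', y t' ^ n ∈ 𝒜 ((n:ℤ)) := by
        intro t'
        have h1 := SetLike.pow_mem_graded n (hy1 t')
        have e : n • (1:ℤ) = (n:ℤ) := by rw [nsmul_eq_mul, mul_one]
        rwa [e] at h1
      have hgenN : ∀ r ∈ Jn, ∀ (u : ω) (p : ℤ),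
          π p (r • u) ∈ N ∧ (p - n < -a → π p (r • u) = 0) := by
        intro r hr
        rw [hJn_def] at hr
        induction hr using Submodule.span_induction with
        | mem g hg =>
          obtain ⟨t', rfl⟩ := hg
          intro u p
          rw [hπsmul (n:ℤ) _ (hyn t') u p]
          constructor
          · refine Submodule.smul_mem_smul ?_ Submodule.mem_top
            rw [hJn_def]
            exact Ideal.subset_span ⟨t', rfl⟩
          · intro hplow
            have h1 : π (p - n) u ∈ w (p - n) := hπmem _ _
            rw [hbelow _ (by omega)] at h1
            have h2 : π (p - n) u = 0 := by simpa using h1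
            rw [h2, smul_zero]
        | zero =>
          intro u p
          rw [zero_smul, hπ0]
          exact ⟨zero_mem N, fun _ => rfl⟩
        | add r1 r2 h1 h2 hp1 hp2 =>
          intro u p
          rw [add_smul, hπadd]
          exact ⟨add_mem (hp1 u p).1 (hp2 u p).1,
            fun h => by rw [(hp1 u p).2 h, (hp2 u p).2 h, add_zero]⟩
        | smul a' r' hr' hp =>
          intro u p
          rw [smul_eq_mul, mul_comm, mul_smul]
          exact hp (a' • u) p
      have hπN : ∀ x ∈ N, ∀ p, π p x ∈ N := by
        intro x hx
        refine Submodule.smul_induction_on hx ?_ ?_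
        · intro r hr u _ p
          exact (hgenN r hr u p).1
        · intro x1 x2 h1 h2 p
          rw [hπadd]
          exact add_mem (h1 p) (h2 p)
      have hπlow : ∀ (p:ℤ), p - n < -a → ∀ x ∈ N, π p x = 0 := by
        intro p hp x hx
        refine Submodule.smul_induction_on hx ?_ ?_
        · intro r hr u _
          exact (hgenN r hr u p).2 hp
        · intro x1 x2 h1 h2
          rw [hπadd, h1, h2, add_zero]
      have hm_of_A1 : ∀ (x : ω), (∀ g ∈ 𝒜 (1:ℤ), g • x ∈ N) → ∀ mm ∈ 𝔪, mm • x ∈ N := by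
        intro x hg mm hmm
        rw [h𝔪] at hmm
        induction hmm using Submodule.span_induction with
        | mem r hr => exact hg r hr
        | zero => rw [zero_smul]; exact zero_mem N
        | add r1 r2 h1 h2 hp1 hp2 => rw [add_smul]; exact add_mem hp1 hp2
        | smul a' r' hr' hp =>
          rw [smul_eq_mul, mul_smul]
          exact Submodule.smul_mem N a' hp
      -- socle lemma, upper part: no part of `ω/J^[n]ω` above degree `nd`
      have hStop : ∀ (r : ℕ) (p : ℤ), (n:ℤ) * d < p → ∀ x, x ∈ w p →
          (∀ mm ∈ (𝔪 ^ r : Ideal R), mm • x ∈ N) → x ∈ N := by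
        intro r
        induction r with
        | zero =>
          intro p hp x hxw hmx
          have h1 := hmx 1 (by rw [pow_zero, Ideal.one_eq_top]; exact Submodule.mem_top)
          rwa [one_smul] at h1
        | succ r ih =>
          intro p hp x hxw hmx
          have hg : ∀ g ∈ 𝒜 (1:ℤ), g • x ∈ N := by
            intro g hgA
            refine ih (1 + p) (by linarith) (g • x) (hwsmul _ _ _ hgA _ hxw) ?_
            intro mm hmm
            rw [smul_smul]
            refine hmx (mm * g) ?_
            rw [pow_succ]
            exact Ideal.mul_mem_mul hmm (h𝔪 ▸ Ideal.subset_span hgA)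
          obtain ⟨u, hu, v, hv, hxuv⟩ := hsoc n x (hm_of_A1 x hg)
          have h1 : π p x = x := hπsame p x hxw
          have h2 : π p v = 0 := hπne p _ v hv (ne_of_lt hp)
          have h3 : x = π p u := by rw [← h1, hxuv, hπadd, h2, add_zero]
          rw [h3]
          exact hπN u hu p
      -- socle lemma, climbing part: any nonzero element can be multiplied into degree `nd`
      have hclimb : ∀ (r : ℕ) (p : ℤ) (x : ω), x ∈ w p → x ∉ N →
          (∀ mm ∈ (𝔪 ^ r : Ideal R), mm • x ∈ N) → ∃ μ ∈ 𝒜 ((n:ℤ) * d - p), μ • x ∉ N := by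
        intro r
        induction r with
        | zero =>
          intro p x hxw hxN hmx
          refine absurd ?_ hxN
          have h1 := hmx 1 (by rw [pow_zero, Ideal.one_eq_top]; exact Submodule.mem_top)
          rwa [one_smul] at h1
        | succ r ih =>
          intro p x hxw hxN hmx
          by_cases hc : ∀ g ∈ 𝒜 (1:ℤ), g • x ∈ N
          · obtain ⟨u, hu, v, hv, hxuv⟩ := hsoc n x (hm_of_A1 x hc)
            by_cases hpd : p = (n:ℤ) * d
            · refine ⟨1, ?_, ?_⟩
              · have h1 : (1:R) ∈ 𝒜 (0:ℤ) := SetLike.one_mem_graded 𝒜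
                have e : (n:ℤ) * d - p = 0 := by rw [hpd]; ring
                rwa [e]
              · rwa [one_smul]
            · exfalso
              apply hxN
              have h1 : π p x = x := hπsame p x hxw
              have h2 : π p v = 0 := hπne p _ v hv (fun h => hpd h.symm)
              have h3 : x = π p u := by rw [← h1, hxuv, hπadd, h2, add_zero]
              rw [h3]
              exact hπN u hu p
          · push_neg at hc
            obtain ⟨g, hgA, hgx⟩ := hc
            have hrec : ∃ μ ∈ 𝒜 ((n:ℤ) * d - (1 + p)), μ • (g • x) ∉ N := by
              refine ih (1 + p) (g • x) (hwsmul _ _ _ hgA _ hxw) hgx ?_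
              intro mm hmm
              rw [smul_smul]
              refine hmx (mm * g) ?_
              rw [pow_succ]
              exact Ideal.mul_mem_mul hmm (h𝔪 ▸ Ideal.subset_span hgA)
            obtain ⟨μ', hμ', hμ'x⟩ := hrec
            refine ⟨μ' * g, ?_, ?_⟩
            · have h1 := SetLike.mul_mem_graded hμ' hgA
              have e : ((n:ℤ) * d - (1 + p)) + 1 = (n:ℤ)*d - p := by ring
              rwa [e] at h1
            · rw [mul_smul]
              exact hμ'x
      -- the witness element `y₀^s • e`
      obtain ⟨e, hew, hene⟩ := (Submodule.ne_bot_iff _).1 hinit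
      have hy0reg : IsSMulRegular ω (y ⟨0, hd⟩) := by
        obtain ⟨d', hd'⟩ : ∃ d', d = d' + 1 := ⟨d - 1, by omega⟩
        subst hd'
        have h := hregw.toIsWeaklyRegular
        rw [List.ofFn_succ, RingTheory.Sequence.isWeaklyRegular_cons_iff] at h
        exact h.1
      set y0 : R := y ⟨0, hd⟩ with hy0_def
      have hy0m : y0 ∈ 𝔪 := hym _
      set sN : ℕ := s.toNat with hsN_def
      have hy0sA : y0 ^ sN ∈ 𝒜 s := by
        have h1 := SetLike.pow_mem_graded sN (hy1 ⟨0, hd⟩)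
        have e : sN • (1:ℤ) = s := by rw [nsmul_eq_mul, mul_one]; omega
        rwa [e] at h1
      have hx0w : (y0 ^ sN) • e ∈ w (s + -a) := hwsmul s (-a) _ hy0sA e hew
      have hx0ne : (y0 ^ sN) • e ≠ 0 := by
        intro h
        have h2 : (y0 ^ sN) • e = (y0 ^ sN) • (0:ω) := by rw [h, smul_zero]
        exact hene (hy0reg.pow sN h2)
      have hx0N : (y0 ^ sN) • e ∉ N := by
        intro hmem
        have h1 := hπlow (s + -a) (by omega) _ hmem
        rw [hπsame _ _ hx0w] at h1
        exact hx0ne h1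
      have hKx : ∀ mm ∈ (𝔪 ^ K0 : Ideal R), mm • ((y0 ^ sN) • e) ∈ N :=
        fun mm hmm => Submodule.smul_mem_smul (hK0 hmm) Submodule.mem_top
      obtain ⟨μ, hμA, hμN⟩ := hclimb K0 (s + -a) _ hx0w hx0N hKx
      -- now use that the colon ideal is generated in degree `t`
      have hy0C : y0 ^ sN ∈ Submodule.colon (ipow J i) (ipow 𝔪 j) := by
        apply hsge
        exact Ideal.pow_mem_pow hy0m sN
      rw [ht] at hy0C
      obtain ⟨cf, hcsupp, hcsum⟩ := Submodule.mem_span_set.mp hy0C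
      have hdecz : ∀ z ∈ cf.support,
          z ∈ Submodule.colon (ipow J i) (ipow 𝔪 j) ∧ z ∈ 𝒜 t := by
        intro z hz
        have h1 := hcsupp hz
        exact ⟨h1.1, h1.2⟩
      have hy0dec : (DirectSum.decompose 𝒜 (y0 ^ sN) s : R) = y0 ^ sN :=
        DirectSum.decompose_of_mem_same 𝒜 hy0sA
      have hdec : y0 ^ sN = ∑ z ∈ cf.support,
          ((DirectSum.decompose 𝒜 (cf z) (s - t) : R) * z) := by
        conv_lhs => rw [← hy0dec, ← hcsum, Finsupp.sum]
        rw [← GradedAlgebra.proj_apply, map_sum]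
        refine Finset.sum_congr rfl ?_
        intro z hz
        rw [GradedAlgebra.proj_apply, smul_eq_mul]
        have hzA := (hdecz z hz).2
        have e1 : s = (s - t) + t := by ring
        conv_lhs => rw [e1]
        exact DirectSum.coe_decompose_mul_add_of_right_mem 𝒜 hzA
      set c1 : ℤ := ((n:ℤ) * d - (s + -a)) + (s - t) with hc1_def
      have hc1c2 : c2 ≤ c1 := by
        rw [hc1_def, hc2_def, hmZ_def, hnd]
        omega
      have hc10 : (0:ℤ) ≤ c1 := le_trans hc20 hc1c2
      have hcoefm : ∀ z ∈ cf.support,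
          μ * (DirectSum.decompose 𝒜 (cf z) (s - t) : R) ∈ 𝔪 ^ c2.toNat := by
        intro z hz
        have h1 : μ * (DirectSum.decompose 𝒜 (cf z) (s - t) : R) ∈ 𝒜 c1 :=
          SetLike.mul_mem_graded hμA (SetLike.coe_mem _)
        have h2 : μ * (DirectSum.decompose 𝒜 (cf z) (s - t) : R) ∈ 𝔪 ^ c1.toNat := by
          refine hAm c1.toNat _ ?_
          rw [Int.toNat_of_nonneg hc10]
          exact h1
        exact Ideal.pow_le_pow_right (by omega) h2
      have hzmul : ∀ z, z ∈ Submodule.colon (ipow J i) (ipow 𝔪 j) →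
          ∀ mm ∈ (𝔪 ^ c2.toNat : Ideal R), mm * z ∈ Jn := by
        intro z hz mm hmm
        have h2 := hredN j hj mZ.toNat
        have e1 : j + (mZ.toNat : ℤ) = c2 := by omega
        rw [e1] at h2
        simp only [ipow] at h2
        rw [h2] at hmm
        refine Submodule.mul_induction_on hmm ?_ ?_
        · intro r hr p hp
          have hzp : z * p ∈ J ^ i.toNat := by
            have h3 := Submodule.mem_colon.mp hz p hp
            rw [smul_eq_mul] at h3
            simpa only [ipow] using h3
          have h3 : r * (z * p) ∈ J ^ mZ.toNat * J ^ i.toNat := Ideal.mul_mem_mul hr hzp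
          rw [← pow_add] at h3
          have e2 : mZ.toNat + i.toNat = A + 1 := by omega
          rw [e2] at h3
          have h4 : r * p * z = r * (z * p) := by ring
          rw [h4]
          exact hJK h3
        · intro x1 x2 h1' h2'
          rw [add_mul]
          exact add_mem h1' h2'
      apply hμN
      have hfin : μ • ((y0 ^ sN) • e)
          = ∑ z ∈ cf.support,
              ((μ * (DirectSum.decompose 𝒜 (cf z) (s - t) : R) * z) • e) := by
        rw [smul_smul, hdec, Finset.mul_sum, Finset.sum_smul]
        refine Finset.sum_congr rfl ?_
        intro z hz
        rw [← mul_assoc]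
      rw [hfin]
      refine Submodule.sum_mem N ?_
      intro z hz
      exact Submodule.smul_mem_smul (hzmul z (hdecz z hz).1 _ (hcoefm z hz)) Submodule.mem_top
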